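/- arXiv:1906.03505 — 8 statements merged into one kernel-verified Lean document; each statement's English description precedes it below -/
import Mathlib

section
/- Let G : ℝⁿ → ℝᵐ admit first- and second-order divided differences δG and δ²G satisfying δG(u,y) − δG(v,y) = δ²G(u,y,v)(u − v) and δG(x,u) − δG(x,v) = δ²G(x,u,v)(u − v), and suppose ‖δG(x,y) − δG(u,v)‖ ≤ M₀(‖x − u‖ + ‖y − v‖) and ‖δ²G(u,x,y) − δ²G(v,x,y)‖ ≤ N₀‖u − v‖. Then for any x₀, x₋₁ and x*, ‖δG(2x₀ − x₋₁, x₋₁) − δG(x₀, x*)‖ ≤ N₀‖x₀ − x₋₁‖² + M₀‖x₀ − x*‖. -/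
/-- divided-difference estimate
`‖δG(2x₀ − x₋₁, x₋₁) − δG(x₀, x*)‖ ≤ N₀‖x₀ − x₋₁‖² + M₀‖x₀ − x*‖`. -/
theorem kurchatov_divided_difference_estimate_two
    {n m : ℕ}
    (G : EuclideanSpace ℝ (Fin n) → EuclideanSpace ℝ (Fin m))
    (δG : EuclideanSpace ℝ (Fin n) → EuclideanSpace ℝ (Fin n) →
      (EuclideanSpace ℝ (Fin n) →L[ℝ] EuclideanSpace ℝ (Fin m)))
    (δ₂G : EuclideanSpace ℝ (Fin n) → EuclideanSpace ℝ (Fin n) →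
      EuclideanSpace ℝ (Fin n) →
      (EuclideanSpace ℝ (Fin n) →L[ℝ]
        (EuclideanSpace ℝ (Fin n) →L[ℝ] EuclideanSpace ℝ (Fin m))))
    (hδG : ∀ x y, (δG x y) (x - y) = G x - G y)
    (hlaw₁ : ∀ u v y, δG u y - δG v y = (δ₂G u y v) (u - v))
    (hlaw₂ : ∀ x u v, δG x u - δG x v = (δ₂G x u v) (u - v))
    (M₀ N₀ : ℝ)
    (hM₀ : ∀ x y u v, ‖δG x y - δG u v‖ ≤ M₀ * (‖x - u‖ + ‖y - v‖))
    (hN₀ : ∀ u v x y, ‖δ₂G u x y - δ₂G v x y‖ ≤ N₀ * ‖u - v‖)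
    (x₀ xm1 xs : EuclideanSpace ℝ (Fin n)) :
    ‖δG (2 • x₀ - xm1) xm1 - δG x₀ xs‖ ≤
      N₀ * ‖x₀ - xm1‖ ^ 2 + M₀ * ‖x₀ - xs‖ := by
  set a := 2 • x₀ - xm1 with ha
  have hax : a - x₀ = x₀ - xm1 := by
    rw [ha, two_smul]; abel
  have h1 := hlaw₁ a x₀ xm1
  rw [hax] at h1
  have h2' : (δ₂G x₀ xm1 x₀) (x₀ - xm1) = δG x₀ x₀ - δG x₀ xm1 := by
    have h2 := hlaw₂ x₀ xm1 x₀
    have hneg : x₀ - xm1 = -(xm1 - x₀) := by abel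
    rw [hneg, map_neg, ← h2]; abel
  have key : δG a xm1 - δG x₀ xs
      = (δ₂G a xm1 x₀ - δ₂G x₀ xm1 x₀) (x₀ - xm1) + (δG x₀ x₀ - δG x₀ xs) := by
    rw [ContinuousLinearMap.sub_apply, h2', ← h1]; abel
  have hb : ‖(δ₂G a xm1 x₀ - δ₂G x₀ xm1 x₀) (x₀ - xm1)‖
      ≤ N₀ * ‖x₀ - xm1‖ ^ 2 := by
    calc ‖(δ₂G a xm1 x₀ - δ₂G x₀ xm1 x₀) (x₀ - xm1)‖
        ≤ ‖δ₂G a xm1 x₀ - δ₂G x₀ xm1 x₀‖ * ‖x₀ - xm1‖ :=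
          ContinuousLinearMap.le_opNorm _ _
      _ ≤ (N₀ * ‖a - x₀‖) * ‖x₀ - xm1‖ :=
          mul_le_mul_of_nonneg_right (hN₀ a x₀ xm1 x₀) (norm_nonneg _)
      _ = N₀ * ‖x₀ - xm1‖ ^ 2 := by rw [hax]; ring
  have hc : ‖δG x₀ x₀ - δG x₀ xs‖ ≤ M₀ * ‖x₀ - xs‖ := by
    have := hM₀ x₀ x₀ x₀ xs
    simpa using this
  calc ‖δG a xm1 - δG x₀ xs‖
      = ‖(δ₂G a xm1 x₀ - δ₂G x₀ xm1 x₀) (x₀ - xm1) + (δG x₀ x₀ - δG x₀ xs)‖ := by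
        rw [key]
    _ ≤ ‖(δ₂G a xm1 x₀ - δ₂G x₀ xm1 x₀) (x₀ - xm1)‖ + ‖δG x₀ x₀ - δG x₀ xs‖ :=
        norm_add_le _ _
    _ ≤ N₀ * ‖x₀ - xm1‖ ^ 2 + M₀ * ‖x₀ - xs‖ := add_le_add hb hc
end

section
/- Let F : ℝⁿ → ℝᵐ be differentiable with ‖F'(x) − F'(x*)‖ ≤ L₀‖x − x*‖, and let G : ℝⁿ → ℝᵐ admit first- and second-order divided differences δG and δ²G satisfying δG(u,y) − δG(v,y) = δ²G(u,y,v)(u − v), δG(x,u) − δG(x,v) = δ²G(x,u,v)(u − v), ‖δG(x,y) − δG(u,v)‖ ≤ M₀(‖x − u‖ + ‖y − v‖), and ‖δ²G(u,x,y) − δ²G(v,x,y)‖ ≤ N₀‖u − v‖. Set A₀ = F'(x₀) + δG(2x₀ − x₋₁, x₋₁) and A* = F'(x*) + δG(x*, x*). Then ‖A₀ − A*‖ ≤ (L₀ + 2M₀)‖x₀ − x*‖ + N₀‖x₀ − x₋₁‖², and consequently ‖A₀‖ ≤ α + (L₀ + 2M₀)‖x₀ − x*‖ + N₀‖x₀ −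 x₋₁‖² whenever ‖A*‖ ≤ α. -/
/-- estimate for `‖A₀ − A*‖` and `‖A₀‖`, where
`A₀ = F'(x₀) + δG(2x₀ − x₋₁, x₋₁)` and `A* = F'(x*) + δG(x*, x*)`. -/
theorem A0_sub_Astar_estimate
    {n m : ℕ}
    (F G : EuclideanSpace ℝ (Fin n) → EuclideanSpace ℝ (Fin m))
    (F' : EuclideanSpace ℝ (Fin n) →
      (EuclideanSpace ℝ (Fin n) →L[ℝ] EuclideanSpace ℝ (Fin m)))
    (δG : EuclideanSpace ℝ (Fin n) → EuclideanSpace ℝ (Fin n) →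
      (EuclideanSpace ℝ (Fin n) →L[ℝ] EuclideanSpace ℝ (Fin m)))
    (δ₂G : EuclideanSpace ℝ (Fin n) → EuclideanSpace ℝ (Fin n) →
      EuclideanSpace ℝ (Fin n) →
      (EuclideanSpace ℝ (Fin n) →L[ℝ]
        (EuclideanSpace ℝ (Fin n) →L[ℝ] EuclideanSpace ℝ (Fin m))))
    (hF' : ∀ x, HasFDerivAt F (F' x) x)
    (hδG : ∀ x y, (δG x y) (x - y) = G x - G y)
    (hlaw₁ : ∀ u v y, δG u y - δG v y = (δ₂G u y v) (u - v))
    (hlaw₂ : ∀ x u v, δG x u - δG x v = (δ₂G x u v) (u - v))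
    (L₀ M₀ N₀ α : ℝ)
    (xs : EuclideanSpace ℝ (Fin n))
    (hL₀ : ∀ x, ‖F' x - F' xs‖ ≤ L₀ * ‖x - xs‖)
    (hM₀ : ∀ x y u v, ‖δG x y - δG u v‖ ≤ M₀ * (‖x - u‖ + ‖y - v‖))
    (hN₀ : ∀ u v x y, ‖δ₂G u x y - δ₂G v x y‖ ≤ N₀ * ‖u - v‖)
    (hα : ‖F' xs + δG xs xs‖ ≤ α)
    (x₀ xm1 : EuclideanSpace ℝ (Fin n)) :
    ‖(F' x₀ + δG (2 • x₀ - xm1) xm1) - (F' xs + δG xs xs)‖ ≤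
        (L₀ + 2 * M₀) * ‖x₀ - xs‖ + N₀ * ‖x₀ - xm1‖ ^ 2 ∧
      ‖F' x₀ + δG (2 • x₀ - xm1) xm1‖ ≤
        α + (L₀ + 2 * M₀) * ‖x₀ - xs‖ + N₀ * ‖x₀ - xm1‖ ^ 2 := by
  set a := (2 : ℕ) • x₀ - xm1 with ha
  have hax : a - x₀ = x₀ - xm1 := by
    rw [ha, two_smul]; abel
  have h1 : δG a xm1 - δG x₀ xm1 = (δ₂G a xm1 x₀) (x₀ - xm1) := by
    rw [← hax]; exact hlaw₁ a x₀ xm1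
  have h2 : δG x₀ xm1 - δG x₀ x₀ = -((δ₂G x₀ xm1 x₀) (x₀ - xm1)) := by
    rw [hlaw₂ x₀ xm1 x₀, ← map_neg, neg_sub]
  have key : (F' x₀ + δG a xm1) - (F' xs + δG xs xs)
      = (F' x₀ - F' xs) + ((δ₂G a xm1 x₀ - δ₂G x₀ xm1 x₀) (x₀ - xm1))
        + (δG x₀ x₀ - δG xs xs) := by
    have : (δ₂G a xm1 x₀ - δ₂G x₀ xm1 x₀) (x₀ - xm1)
        = (δ₂G a xm1 x₀) (x₀ - xm1) - (δ₂G x₀ xm1 x₀) (x₀ - xm1) := rfl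
    rw [this, ← h1]
    have h2' : (δ₂G x₀ xm1 x₀) (x₀ - xm1) = -(δG x₀ xm1 - δG x₀ x₀) := by
      rw [h2, neg_neg]
    rw [h2']
    abel
  have bN : ‖(δ₂G a xm1 x₀ - δ₂G x₀ xm1 x₀) (x₀ - xm1)‖ ≤ N₀ * ‖x₀ - xm1‖ ^ 2 := by
    calc ‖(δ₂G a xm1 x₀ - δ₂G x₀ xm1 x₀) (x₀ - xm1)‖
        ≤ ‖δ₂G a xm1 x₀ - δ₂G x₀ xm1 x₀‖ * ‖x₀ - xm1‖ :=
          (δ₂G a xm1 x₀ - δ₂G x₀ xm1 x₀).le_opNorm _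
      _ ≤ (N₀ * ‖a - x₀‖) * ‖x₀ - xm1‖ := by
          exact mul_le_mul_of_nonneg_right (hN₀ a x₀ xm1 x₀) (norm_nonneg _)
      _ = N₀ * ‖x₀ - xm1‖ ^ 2 := by rw [hax]; ring
  have bM : ‖δG x₀ x₀ - δG xs xs‖ ≤ 2 * M₀ * ‖x₀ - xs‖ := by
    have := hM₀ x₀ x₀ xs xs
    linarith
  have bL : ‖F' x₀ - F' xs‖ ≤ L₀ * ‖x₀ - xs‖ := hL₀ x₀
  have main : ‖(F' x₀ + δG a xm1) - (F' xs + δG xs xs)‖ ≤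
      (L₀ + 2 * M₀) * ‖x₀ - xs‖ + N₀ * ‖x₀ - xm1‖ ^ 2 := by
    rw [key]
    calc ‖(F' x₀ - F' xs) + ((δ₂G a xm1 x₀ - δ₂G x₀ xm1 x₀) (x₀ - xm1))
          + (δG x₀ x₀ - δG xs xs)‖
        ≤ ‖(F' x₀ - F' xs) + ((δ₂G a xm1 x₀ - δ₂G x₀ xm1 x₀) (x₀ - xm1))‖
          + ‖δG x₀ x₀ - δG xs xs‖ := norm_add_le _ _
      _ ≤ ‖F' x₀ - F' xs‖ + ‖(δ₂G a xm1 x₀ - δ₂G x₀ xm1 x₀) (x₀ - xm1)‖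
          + ‖δG x₀ x₀ - δG xs xs‖ := by
            have := norm_add_le (F' x₀ - F' xs)
              ((δ₂G a xm1 x₀ - δ₂G x₀ xm1 x₀) (x₀ - xm1))
            linarith
      _ ≤ (L₀ + 2 * M₀) * ‖x₀ - xs‖ + N₀ * ‖x₀ - xm1‖ ^ 2 := by linarith
  refine ⟨main, ?_⟩
  calc ‖F' x₀ + δG a xm1‖
      ≤ ‖F' xs + δG xs xs‖ + ‖(F' x₀ + δG a xm1) - (F' xs + δG xs xs)‖ := by
        have := norm_add_le (F' xs + δG xs xs) ((F' x₀ + δG a xm1) - (F' xs + δG xs xs))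
        simpa using this
    _ ≤ α + ((L₀ + 2 * M₀) * ‖x₀ - xs‖ + N₀ * ‖x₀ - xm1‖ ^ 2) := add_le_add hα main
    _ = α + (L₀ + 2 * M₀) * ‖x₀ - xs‖ + N₀ * ‖x₀ - xm1‖ ^ 2 := by ring
end

section
/- Let A and A* be linear maps from ℝⁿ to ℝᵐ such that A*ᵀA* is invertible with ‖(A*ᵀA*)⁻¹‖ ≤ B and ‖A*‖ ≤ α. Then ‖I − (A*ᵀA*)⁻¹AᵀA‖ ≤ B(2α + ‖A − A*‖)·‖A − A*‖, where I is the identity on ℝⁿ. -/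
set_option maxHeartbeats 1000000


/-- perturbation bound for the normal operator.
`Aᵀ` is `ContinuousLinearMap.adjoint A`; composition of linear maps is the ring
multiplication on endomorphisms of `ℝⁿ`, and `(A*ᵀA*)⁻¹` is `Ring.inverse`. -/
theorem norm_id_sub_inv_normal_eq_le
    {n m : ℕ}
    (A Astar : EuclideanSpace ℝ (Fin n) →L[ℝ] EuclideanSpace ℝ (Fin m))
    (B α : ℝ)
    (hUnit : IsUnit ((ContinuousLinearMap.adjoint Astar).comp Astar))
    (hB : ‖Ring.inverse ((ContinuousLinearMap.adjoint Astar).comp Astar)‖ ≤ B)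
    (hα : ‖Astar‖ ≤ α) :
    ‖(1 : EuclideanSpace ℝ (Fin n) →L[ℝ] EuclideanSpace ℝ (Fin n)) -
        Ring.inverse ((ContinuousLinearMap.adjoint Astar).comp Astar) *
          ((ContinuousLinearMap.adjoint A).comp A)‖ ≤
      B * (2 * α + ‖A - Astar‖) * ‖A - Astar‖ := by
  set R := Ring.inverse ((ContinuousLinearMap.adjoint Astar).comp Astar) with hR
  set E := A - Astar with hE
  have hEnn : (0:ℝ) ≤ ‖E‖ := norm_nonneg _
  have hαnn : (0:ℝ) ≤ α := le_trans (norm_nonneg _) hα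
  have hBnn : (0:ℝ) ≤ B := le_trans (norm_nonneg _) hB
  have hkey : (1 : EuclideanSpace ℝ (Fin n) →L[ℝ] EuclideanSpace ℝ (Fin n)) -
      R * ((ContinuousLinearMap.adjoint A).comp A) =
      R * ((ContinuousLinearMap.adjoint Astar).comp Astar -
        (ContinuousLinearMap.adjoint A).comp A) := by
    rw [mul_sub, Ring.inverse_mul_cancel _ hUnit]
  have hdiff : (ContinuousLinearMap.adjoint Astar).comp Astar -
      (ContinuousLinearMap.adjoint A).comp A =
      -((ContinuousLinearMap.adjoint Astar).comp E +
        (ContinuousLinearMap.adjoint E).comp Astar +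
        (ContinuousLinearMap.adjoint E).comp E) := by
    have : A = Astar + E := by rw [hE]; abel
    rw [this]
    ext x
    simp [ContinuousLinearMap.comp_apply, map_add]
    abel
  have hnd : ‖(ContinuousLinearMap.adjoint Astar).comp Astar -
      (ContinuousLinearMap.adjoint A).comp A‖ ≤ (2 * α + ‖E‖) * ‖E‖ := by
    rw [hdiff, norm_neg]
    have h1 : ‖(ContinuousLinearMap.adjoint Astar).comp E‖ ≤ α * ‖E‖ := by
      calc ‖(ContinuousLinearMap.adjoint Astar).comp E‖
          ≤ ‖ContinuousLinearMap.adjoint Astar‖ * ‖E‖ := ContinuousLinearMap.opNorm_comp_le _ _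
        _ ≤ α * ‖E‖ := by
            rw [LinearIsometryEquiv.norm_map]
            exact mul_le_mul_of_nonneg_right hα hEnn
    have h2 : ‖(ContinuousLinearMap.adjoint E).comp Astar‖ ≤ ‖E‖ * α := by
      calc ‖(ContinuousLinearMap.adjoint E).comp Astar‖
          ≤ ‖ContinuousLinearMap.adjoint E‖ * ‖Astar‖ := ContinuousLinearMap.opNorm_comp_le _ _
        _ ≤ ‖E‖ * α := by
            rw [LinearIsometryEquiv.norm_map]
            exact mul_le_mul_of_nonneg_left hα hEnn
    have h3 : ‖(ContinuousLinearMap.adjoint E).comp E‖ ≤ ‖E‖ * ‖E‖ := by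
      calc ‖(ContinuousLinearMap.adjoint E).comp E‖
          ≤ ‖ContinuousLinearMap.adjoint E‖ * ‖E‖ := ContinuousLinearMap.opNorm_comp_le _ _
        _ = ‖E‖ * ‖E‖ := by rw [LinearIsometryEquiv.norm_map]
    calc ‖(ContinuousLinearMap.adjoint Astar).comp E +
          (ContinuousLinearMap.adjoint E).comp Astar +
          (ContinuousLinearMap.adjoint E).comp E‖
        ≤ ‖(ContinuousLinearMap.adjoint Astar).comp E‖ +
          ‖(ContinuousLinearMap.adjoint E).comp Astar‖ +
          ‖(ContinuousLinearMap.adjoint E).comp E‖ := norm_add₃_le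
      _ ≤ α * ‖E‖ + ‖E‖ * α + ‖E‖ * ‖E‖ := by linarith
      _ = (2 * α + ‖E‖) * ‖E‖ := by ring
  calc ‖(1 : EuclideanSpace ℝ (Fin n) →L[ℝ] EuclideanSpace ℝ (Fin n)) -
        R * ((ContinuousLinearMap.adjoint A).comp A)‖
      = ‖R * ((ContinuousLinearMap.adjoint Astar).comp Astar -
          (ContinuousLinearMap.adjoint A).comp A)‖ := by rw [hkey]
    _ ≤ ‖R‖ * ‖(ContinuousLinearMap.adjoint Astar).comp Astar -
          (ContinuousLinearMap.adjoint A).comp A‖ := norm_mul_le _ _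
    _ ≤ B * ((2 * α + ‖E‖) * ‖E‖) := by
        apply mul_le_mul hB hnd (norm_nonneg _) hBnn
    _ = B * (2 * α + ‖E‖) * ‖E‖ := by ring
end

section
/- Let A and A* be linear maps from ℝⁿ to ℝᵐ such that A*ᵀA* is invertible with ‖(A*ᵀA*)⁻¹‖ ≤ B and ‖A*‖ ≤ α, and set δ = ‖A − A*‖. If B(2α + δ)δ < 1, then AᵀA is invertible and ‖(AᵀA)⁻¹‖ ≤ B / (1 − B(2α + δ)δ). -/
set_option maxHeartbeats 1000000 in
/-- Banach-lemma type invertibility of the perturbed normal operator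
`AᵀA`, with the bound `‖(AᵀA)⁻¹‖ ≤ B / (1 - B(2α + δ)δ)` where `δ = ‖A - A*‖`. -/
theorem normal_operator_invertible_of_perturbation
    {n m : ℕ}
    (A Astar : EuclideanSpace ℝ (Fin n) →L[ℝ] EuclideanSpace ℝ (Fin m))
    (B α : ℝ)
    (hUnit : IsUnit ((ContinuousLinearMap.adjoint Astar).comp Astar))
    (hB : ‖Ring.inverse ((ContinuousLinearMap.adjoint Astar).comp Astar)‖ ≤ B)
    (hα : ‖Astar‖ ≤ α)
    (hsmall : B * (2 * α + ‖A - Astar‖) * ‖A - Astar‖ < 1) :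
    IsUnit ((ContinuousLinearMap.adjoint A).comp A) ∧
      ‖Ring.inverse ((ContinuousLinearMap.adjoint A).comp A)‖ ≤
        B / (1 - B * (2 * α + ‖A - Astar‖) * ‖A - Astar‖) := by
  set δ := ‖A - Astar‖ with hδ
  set Ms := (ContinuousLinearMap.adjoint Astar).comp Astar with hMs
  set M := (ContinuousLinearMap.adjoint A).comp A with hM
  have hδ0 : (0:ℝ) ≤ δ := norm_nonneg _
  have hB0 : (0:ℝ) ≤ B := le_trans (norm_nonneg _) hB
  have hα0 : (0:ℝ) ≤ α := le_trans (norm_nonneg _) hα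
  have hAnorm : ‖A‖ ≤ α + δ := by
    calc ‖A‖ = ‖Astar + (A - Astar)‖ := congrArg norm (by abel)
    _ ≤ ‖Astar‖ + ‖A - Astar‖ := norm_add_le _ _
    _ ≤ α + δ := by gcongr
  -- E = M - Ms
  have hEdecomp : M - Ms =
      (ContinuousLinearMap.adjoint A).comp (A - Astar) +
      (ContinuousLinearMap.adjoint (A - Astar)).comp Astar := by
    rw [hM, hMs, map_sub]
    ext x
    simp [ContinuousLinearMap.sub_comp, ContinuousLinearMap.comp_sub]
  have hadjA : ‖ContinuousLinearMap.adjoint A‖ = ‖A‖ :=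
    LinearIsometryEquiv.norm_map _ A
  have hadjD : ‖ContinuousLinearMap.adjoint (A - Astar)‖ = ‖A - Astar‖ :=
    LinearIsometryEquiv.norm_map _ (A - Astar)
  have hE : ‖M - Ms‖ ≤ (2 * α + δ) * δ := by
    rw [hEdecomp]
    calc ‖(ContinuousLinearMap.adjoint A).comp (A - Astar) +
          (ContinuousLinearMap.adjoint (A - Astar)).comp Astar‖
        ≤ ‖(ContinuousLinearMap.adjoint A).comp (A - Astar)‖ +
          ‖(ContinuousLinearMap.adjoint (A - Astar)).comp Astar‖ := norm_add_le _ _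
      _ ≤ ‖ContinuousLinearMap.adjoint A‖ * ‖A - Astar‖ +
          ‖ContinuousLinearMap.adjoint (A - Astar)‖ * ‖Astar‖ := by
            gcongr <;> exact ContinuousLinearMap.opNorm_comp_le _ _
      _ ≤ (α + δ) * δ + δ * α := by
            rw [hadjA, hadjD]
            gcongr <;> simp [hδ]
      _ = (2 * α + δ) * δ := by ring
  obtain ⟨u, hu⟩ := hUnit
  set iMs := Ring.inverse Ms with hiMs
  set t : EuclideanSpace ℝ (Fin n) →L[ℝ] EuclideanSpace ℝ (Fin n) :=
    -(iMs * (M - Ms)) with ht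
  have htnorm : ‖t‖ ≤ B * ((2 * α + δ) * δ) := by
    rw [ht, norm_neg]
    calc ‖iMs * (M - Ms)‖ ≤ ‖iMs‖ * ‖M - Ms‖ := norm_mul_le _ _
    _ ≤ B * ((2 * α + δ) * δ) := by
        apply mul_le_mul hB hE (norm_nonneg _) hB0
  have hc1 : B * ((2 * α + δ) * δ) < 1 := by
    rw [← mul_assoc]; exact hsmall
  have htlt : ‖t‖ < 1 := lt_of_le_of_lt htnorm hc1
  have hMsinv : Ms * iMs = 1 := by
    rw [hiMs, ← hu]
    exact Ring.mul_inverse_cancel _ u.isUnit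
  have hfact : M = Ms * (1 - t) := by
    rw [ht, sub_neg_eq_add, mul_add, mul_one, ← mul_assoc, hMsinv, one_mul]
    abel
  have hv : IsUnit ((1:EuclideanSpace ℝ (Fin n) →L[ℝ] EuclideanSpace ℝ (Fin n)) - t) :=
    isUnit_one_sub_of_norm_lt_one htlt
  have hMunit : IsUnit M := by rw [hfact, ← hu]; exact u.isUnit.mul hv
  refine ⟨hMunit, ?_⟩
  obtain ⟨v, hvv⟩ := hv
  have hw : M = ((u * v : _ˣ) : EuclideanSpace ℝ (Fin n) →L[ℝ] EuclideanSpace ℝ (Fin n)) := by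
    rw [Units.val_mul, hu, hvv, hfact]
  have hinvM : Ring.inverse M = ((v⁻¹ * u⁻¹ : _ˣ) :
      EuclideanSpace ℝ (Fin n) →L[ℝ] EuclideanSpace ℝ (Fin n)) := by
    rw [hw, Ring.inverse_unit, mul_inv_rev]
  have hiu : (↑u⁻¹ : EuclideanSpace ℝ (Fin n) →L[ℝ] EuclideanSpace ℝ (Fin n)) = iMs := by
    rw [hiMs, ← hu, Ring.inverse_unit]
  have hiv : (↑v⁻¹ : EuclideanSpace ℝ (Fin n) →L[ℝ] EuclideanSpace ℝ (Fin n))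
      = Ring.inverse (1 - t) := by
    rw [← hvv, Ring.inverse_unit]
  have hvbound : ‖(↑v⁻¹ : EuclideanSpace ℝ (Fin n) →L[ℝ] EuclideanSpace ℝ (Fin n))‖
      ≤ (1 - ‖t‖)⁻¹ := by
    rw [hiv, ← geom_series_eq_inverse t htlt]
    have h1 : ‖(1 : EuclideanSpace ℝ (Fin n) →L[ℝ] EuclideanSpace ℝ (Fin n))‖ ≤ 1 :=
      ContinuousLinearMap.norm_id_le
    have := tsum_geometric_le_of_norm_lt_one t htlt
    linarith
  have hc0 : 0 < 1 - B * (2 * α + δ) * δ := by linarith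
  have htc : ‖t‖ ≤ B * (2 * α + δ) * δ := by rw [mul_assoc]; exact htnorm
  have h1t : 0 < 1 - ‖t‖ := by linarith
  calc ‖Ring.inverse M‖
      = ‖(↑v⁻¹ : _) * (↑u⁻¹ : EuclideanSpace ℝ (Fin n) →L[ℝ] EuclideanSpace ℝ (Fin n))‖ := by
        rw [hinvM, Units.val_mul]
    _ ≤ ‖(↑v⁻¹ : EuclideanSpace ℝ (Fin n) →L[ℝ] EuclideanSpace ℝ (Fin n))‖ *
        ‖(↑u⁻¹ : EuclideanSpace ℝ (Fin n) →L[ℝ] EuclideanSpace ℝ (Fin n))‖ := norm_mul_le _ _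
    _ ≤ (1 - ‖t‖)⁻¹ * B := by
        apply mul_le_mul hvbound _ (norm_nonneg _) (by positivity)
        rw [hiu]; exact hB
    _ ≤ (1 - B * (2 * α + δ) * δ)⁻¹ * B :=
        mul_le_mul_of_nonneg_right (inv_anti₀ hc0 (by linarith)) hB0
    _ = B / (1 - B * (2 * α + δ) * δ) := by rw [div_eq_mul_inv, mul_comm]
end

section
/- Let F : ℝⁿ → ℝᵐ be continuously differentiable with ‖F'(u) − F'(v)‖ ≤ L‖u − v‖ on a convex set containing all points below, and let G : ℝⁿ → ℝᵐ admit first- and second-order divided differences δG, δ²G satisfying δG(u,y) − δG(v,y) = δ²G(u,y,v)(u − v), δG(x,u) − δG(x,v) = δ²G(x,u,v)(u − v), ‖δG(x,y) − δG(u,v)‖ ≤ M(‖x − u‖ + ‖y − v‖), and ‖δ²G(u,x,y) − δ²G(v,x,y)‖ ≤ N‖u − v‖. Set A₀ = F'(x₀) + δG(2x₀ − x₋₁, x₋₁). Then ‖A₀ − ∫₀¹ F'(x* + t(x₀ − x*)) dt − δG(x₀, x*)‖ ≤ (L/2 + M)‖x₀ − x*‖ + N‖x₀ − x₋₁‖².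 -/
open intervalIntegral

/-- estimate for
`‖A₀ − ∫₀¹ F'(x* + t(x₀ − x*)) dt − δG(x₀, x*)‖` with
`A₀ = F'(x₀) + δG(2x₀ − x₋₁, x₋₁)`. -/
theorem A0_sub_integral_sub_dividedDiff_estimate
    {n m : ℕ}
    (F G : EuclideanSpace ℝ (Fin n) → EuclideanSpace ℝ (Fin m))
    (F' : EuclideanSpace ℝ (Fin n) →
      (EuclideanSpace ℝ (Fin n) →L[ℝ] EuclideanSpace ℝ (Fin m)))
    (δG : EuclideanSpace ℝ (Fin n) → EuclideanSpace ℝ (Fin n) →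
      (EuclideanSpace ℝ (Fin n) →L[ℝ] EuclideanSpace ℝ (Fin m)))
    (δ₂G : EuclideanSpace ℝ (Fin n) → EuclideanSpace ℝ (Fin n) →
      EuclideanSpace ℝ (Fin n) →
      (EuclideanSpace ℝ (Fin n) →L[ℝ]
        (EuclideanSpace ℝ (Fin n) →L[ℝ] EuclideanSpace ℝ (Fin m))))
    (S : Set (EuclideanSpace ℝ (Fin n))) (hS : Convex ℝ S)
    (xs x₀ xm1 : EuclideanSpace ℝ (Fin n))
    (hxs : xs ∈ S) (hx₀ : x₀ ∈ S) (hxm1 : xm1 ∈ S) (hx₂ : 2 • x₀ - xm1 ∈ S)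
    (hF : ∀ x ∈ S, HasFDerivAt F (F' x) x)
    (hFcont : ContinuousOn F' S)
    (hδG : ∀ x ∈ S, ∀ y ∈ S, (δG x y) (x - y) = G x - G y)
    (hlaw₁ : ∀ u ∈ S, ∀ v ∈ S, ∀ y ∈ S, δG u y - δG v y = (δ₂G u y v) (u - v))
    (hlaw₂ : ∀ x ∈ S, ∀ u ∈ S, ∀ v ∈ S, δG x u - δG x v = (δ₂G x u v) (u - v))
    (L M N : ℝ)
    (hL : ∀ u ∈ S, ∀ v ∈ S, ‖F' u - F' v‖ ≤ L * ‖u - v‖)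
    (hM : ∀ x ∈ S, ∀ y ∈ S, ∀ u ∈ S, ∀ v ∈ S,
      ‖δG x y - δG u v‖ ≤ M * (‖x - u‖ + ‖y - v‖))
    (hN : ∀ u ∈ S, ∀ v ∈ S, ∀ x ∈ S, ∀ y ∈ S,
      ‖δ₂G u x y - δ₂G v x y‖ ≤ N * ‖u - v‖) :
    ‖(F' x₀ + δG (2 • x₀ - xm1) xm1) -
        (∫ t in (0:ℝ)..1, F' (xs + t • (x₀ - xs))) - δG x₀ xs‖ ≤
      (L / 2 + M) * ‖x₀ - xs‖ + N * ‖x₀ - xm1‖ ^ 2 := by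
  classical
  -- the path
  have hγc : Continuous (fun t : ℝ => xs + t • (x₀ - xs)) :=
    continuous_const.add (continuous_id.smul continuous_const)
  have hmem : ∀ t ∈ Set.Icc (0:ℝ) 1, xs + t • (x₀ - xs) ∈ S := by
    intro t ht
    have h := hS hxs hx₀ (by linarith [ht.2] : (0:ℝ) ≤ 1 - t) ht.1 (by ring)
    have : (1 - t) • xs + t • x₀ = xs + t • (x₀ - xs) := by
      rw [sub_smul, one_smul, smul_sub]; abel
    rwa [this] at h
  have hcontOn : ContinuousOn (fun t : ℝ => F' (xs + t • (x₀ - xs)))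
      (Set.Icc (0:ℝ) 1) :=
    hFcont.comp hγc.continuousOn hmem
  have hInt : IntervalIntegrable (fun t : ℝ => F' (xs + t • (x₀ - xs)))
      MeasureTheory.volume 0 1 := by
    apply ContinuousOn.intervalIntegrable
    rwa [Set.uIcc_of_le (by norm_num : (0:ℝ) ≤ 1)]
  -- first piece
  have h1 : F' x₀ - (∫ t in (0:ℝ)..1, F' (xs + t • (x₀ - xs)))
      = ∫ t in (0:ℝ)..1, (F' x₀ - F' (xs + t • (x₀ - xs))) := by
    rw [intervalIntegral.integral_sub intervalIntegrable_const hInt,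
      intervalIntegral.integral_const]
    simp
  have hb1 : ‖∫ t in (0:ℝ)..1, (F' x₀ - F' (xs + t • (x₀ - xs)))‖
      ≤ L / 2 * ‖x₀ - xs‖ := by
    have hle : ∀ t ∈ Set.Icc (0:ℝ) 1,
        ‖F' x₀ - F' (xs + t • (x₀ - xs))‖ ≤ (1 - t) * (L * ‖x₀ - xs‖) := by
      intro t ht
      have h := hL x₀ hx₀ (xs + t • (x₀ - xs)) (hmem t ht)
      have hx : x₀ - (xs + t • (x₀ - xs)) = (1 - t) • (x₀ - xs) := by
        rw [sub_smul, one_smul]; abel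
      rw [hx, norm_smul, Real.norm_eq_abs, abs_of_nonneg (by linarith [ht.2])] at h
      calc ‖F' x₀ - F' (xs + t • (x₀ - xs))‖ ≤ L * ((1 - t) * ‖x₀ - xs‖) := h
        _ = (1 - t) * (L * ‖x₀ - xs‖) := by ring
    have := intervalIntegral.norm_integral_le_of_norm_le
      (μ := MeasureTheory.volume) (a := (0:ℝ)) (b := 1)
      (f := fun t => F' x₀ - F' (xs + t • (x₀ - xs)))
      (g := fun t => (1 - t) * (L * ‖x₀ - xs‖))
      zero_le_one ?_ ?_
    · have hval : (∫ t in (0:ℝ)..1, (1 - t) * (L * ‖x₀ - xs‖))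
          = L / 2 * ‖x₀ - xs‖ := by
        rw [intervalIntegral.integral_mul_const]
        have : (∫ t in (0:ℝ)..1, (1 - t)) = 1 / 2 := by
          rw [intervalIntegral.integral_sub intervalIntegrable_const
            intervalIntegrable_id,
            intervalIntegral.integral_const, integral_id]
          norm_num
        rw [this]; ring
      have hnn : 0 ≤ L * ‖x₀ - xs‖ :=
        le_trans (norm_nonneg _) (by simpa using hle 0 ⟨le_refl _, zero_le_one⟩)
      rwa [hval] at this
    · filter_upwards with t ht
      exact hle t ⟨ht.1.le, ht.2⟩
    · apply ContinuousOn.intervalIntegrable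
      fun_prop
  -- second piece
  have e1 := hlaw₁ (2 • x₀ - xm1) hx₂ x₀ hx₀ xm1 hxm1
  have e2 := hlaw₂ x₀ hx₀ xm1 hxm1 x₀ hx₀
  have key : δG (2 • x₀ - xm1) xm1 - δG x₀ x₀
      = (δ₂G (2 • x₀ - xm1) xm1 x₀ - δ₂G x₀ xm1 x₀) (x₀ - xm1) := by
    have hd : (2 • x₀ - xm1) - x₀ = x₀ - xm1 := by
      rw [two_smul]; abel
    rw [hd] at e1
    have hd2 : xm1 - x₀ = -(x₀ - xm1) := by abel
    rw [hd2, map_neg] at e2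
    have : δG (2 • x₀ - xm1) xm1 - δG x₀ x₀
        = (δG (2 • x₀ - xm1) xm1 - δG x₀ xm1) + (δG x₀ xm1 - δG x₀ x₀) := by abel
    rw [this, e1, e2, ContinuousLinearMap.sub_apply]
    abel
  have hb2 : ‖δG (2 • x₀ - xm1) xm1 - δG x₀ x₀‖ ≤ N * ‖x₀ - xm1‖ ^ 2 := by
    rw [key]
    calc ‖(δ₂G (2 • x₀ - xm1) xm1 x₀ - δ₂G x₀ xm1 x₀) (x₀ - xm1)‖
        ≤ ‖δ₂G (2 • x₀ - xm1) xm1 x₀ - δ₂G x₀ xm1 x₀‖ * ‖x₀ - xm1‖ :=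
          ContinuousLinearMap.le_opNorm _ _
      _ ≤ (N * ‖(2 • x₀ - xm1) - x₀‖) * ‖x₀ - xm1‖ := by
          apply mul_le_mul_of_nonneg_right _ (norm_nonneg _)
          exact hN _ hx₂ _ hx₀ _ hxm1 _ hx₀
      _ = N * ‖x₀ - xm1‖ ^ 2 := by
          have : (2 • x₀ - xm1) - x₀ = x₀ - xm1 := by rw [two_smul]; abel
          rw [this]; ring
  -- third piece
  have hb3 : ‖δG x₀ x₀ - δG x₀ xs‖ ≤ M * ‖x₀ - xs‖ := by
    have h := hM x₀ hx₀ x₀ hx₀ x₀ hx₀ xs hxs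
    simpa using h
  -- combine
  have hsplit : (F' x₀ + δG (2 • x₀ - xm1) xm1) -
        (∫ t in (0:ℝ)..1, F' (xs + t • (x₀ - xs))) - δG x₀ xs
      = (F' x₀ - (∫ t in (0:ℝ)..1, F' (xs + t • (x₀ - xs))))
        + (δG (2 • x₀ - xm1) xm1 - δG x₀ x₀) + (δG x₀ x₀ - δG x₀ xs) := by
    abel
  rw [hsplit]
  calc ‖(F' x₀ - (∫ t in (0:ℝ)..1, F' (xs + t • (x₀ - xs))))
        + (δG (2 • x₀ - xm1) xm1 - δG x₀ x₀) + (δG x₀ x₀ - δG x₀ xs)‖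
      ≤ ‖F' x₀ - (∫ t in (0:ℝ)..1, F' (xs + t • (x₀ - xs)))‖
        + ‖δG (2 • x₀ - xm1) xm1 - δG x₀ x₀‖ + ‖δG x₀ x₀ - δG x₀ xs‖ :=
        norm_add₃_le
    _ ≤ L / 2 * ‖x₀ - xs‖ + N * ‖x₀ - xm1‖ ^ 2 + M * ‖x₀ - xs‖ := by
        have hA : ‖F' x₀ - (∫ t in (0:ℝ)..1, F' (xs + t • (x₀ - xs)))‖
            ≤ L / 2 * ‖x₀ - xs‖ := by rw [h1]; exact hb1
        exact add_le_add (add_le_add hA hb2) hb3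
    _ = (L / 2 + M) * ‖x₀ - xs‖ + N * ‖x₀ - xm1‖ ^ 2 := by ring
end

section
/- Let F : ℝⁿ → ℝᵐ be continuously differentiable and G : ℝⁿ → ℝᵐ admit first- and second-order divided differences δG, δ²G with the defining laws and the Lipschitz conditions with constants L (for F' on the relevant set), M, N (for δG and δ²G). Let x* satisfy A*ᵀ(F(x*) + G(x*)) = 0 with A* = F'(x*) + δG(x*, x*), ‖F(x*) + G(x*)‖ ≤ η. Let x, x' be two points, set A = F'(x) + δG(2x − x', x'), and assume AᵀA is invertible with ‖(AᵀA)⁻¹‖ ≤ g. Then the next Gauss–Newton–Kurchatov iterate x⁺ = x − (AᵀA)⁻¹Aᵀ(F(x) + G(x)) satisfies ‖x⁺ − x*‖ ≤ g·{[α + (L + 2M)‖x − x*‖ + N‖x − x'‖²]·[(L/2 + M)‖x − x*‖ + N‖x − x'‖²]·‖x − x*‖ + η·[(L + 2M)‖x − x*‖ + N‖x − x'‖²]}, where ‖A*‖ ≤ α. -/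
open intervalIntegral

lemma taylor_half_bound {E F : Type*} [NormedAddCommGroup E] [NormedSpace ℝ E]
    [NormedAddCommGroup F] [NormedSpace ℝ F] [CompleteSpace F]
    (f : E → F) (f' : E → (E →L[ℝ] F)) {S : Set E} (hS : Convex ℝ S)
    (hf : ∀ z ∈ S, HasFDerivAt f (f' z) z) (hc : ContinuousOn f' S)
    {L : ℝ} (hL : ∀ u ∈ S, ∀ v ∈ S, ‖f' u - f' v‖ ≤ L * ‖u - v‖)
    {a b : E} (ha : a ∈ S) (hb : b ∈ S) :
    ‖f b - f a - (f' b) (b - a)‖ ≤ L / 2 * ‖b - a‖ ^ 2 := by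
  rcases eq_or_ne b a with rfl | hne
  · simp
  have hLnn : 0 ≤ L := by
    have h1 := hL b hb a ha
    have h2 : (0:ℝ) < ‖b - a‖ := by
      rw [norm_pos_iff]; exact sub_ne_zero.mpr hne
    nlinarith [norm_nonneg (f' b - f' a)]
  set d := b - a with hd
  have hγmem : ∀ t ∈ Set.Icc (0:ℝ) 1, a + t • d ∈ S := by
    intro t ht
    have h := hS ha hb (by linarith [ht.2] : (0:ℝ) ≤ 1 - t) ht.1 (by ring)
    have : a + t • d = (1 - t) • a + t • b := by
      simp only [hd]; module
    rwa [this]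
  have hline : ∀ t : ℝ, HasDerivAt (fun s : ℝ => a + s • d) d t := by
    intro t
    simpa using ((hasDerivAt_id t).smul_const d).const_add a
  have hφ : ∀ t ∈ Set.uIcc (0:ℝ) 1,
      HasDerivAt (fun s : ℝ => f (a + s • d)) ((f' (a + t • d)) d) t := by
    intro t ht
    rw [Set.uIcc_of_le zero_le_one] at ht
    exact (hf _ (hγmem t ht)).comp_hasDerivAt t (hline t)
  have hγcont : ContinuousOn (fun t : ℝ => a + t • d) (Set.Icc 0 1) := by fun_prop
  have hcont : ContinuousOn (fun t : ℝ => (f' (a + t • d)) d) (Set.Icc 0 1) :=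
    ContinuousOn.clm_apply (hc.comp hγcont hγmem) continuousOn_const
  have hint : IntervalIntegrable (fun t : ℝ => (f' (a + t • d)) d) MeasureTheory.volume 0 1 := by
    apply ContinuousOn.intervalIntegrable
    rwa [Set.uIcc_of_le zero_le_one]
  have heq : ∫ t in (0:ℝ)..1, (f' (a + t • d)) d = f b - f a := by
    rw [intervalIntegral.integral_eq_sub_of_hasDerivAt hφ hint]
    have h1 : a + (1:ℝ) • d = b := by simp [hd]
    have h0 : a + (0:ℝ) • d = a := by simp
    rw [h1, h0]
  have hsub : ∫ t in (0:ℝ)..1, ((f' (a + t • d)) d - (f' b) d) = f b - f a - (f' b) d := by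
    rw [intervalIntegral.integral_sub hint intervalIntegrable_const, heq,
      intervalIntegral.integral_const]
    simp
  rw [← hsub]
  have hbound : ∀ t ∈ Set.Ioc (0:ℝ) 1,
      ‖(f' (a + t • d)) d - (f' b) d‖ ≤ L * ‖d‖ ^ 2 * (1 - t) := by
    intro t ht
    have hmem := hγmem t ⟨le_of_lt ht.1, ht.2⟩
    have h1 : (f' (a + t • d)) d - (f' b) d = (f' (a + t • d) - f' b) d := by
      rw [ContinuousLinearMap.sub_apply]
    rw [h1]
    have h2 : ‖(f' (a + t • d) - f' b) d‖ ≤ ‖f' (a + t • d) - f' b‖ * ‖d‖ :=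
      ContinuousLinearMap.le_opNorm _ _
    have h3 : ‖f' (a + t • d) - f' b‖ ≤ L * ‖a + t • d - b‖ := hL _ hmem _ hb
    have h4 : a + t • d - b = (t - 1) • d := by simp only [hd]; module
    have h5 : ‖a + t • d - b‖ = (1 - t) * ‖d‖ := by
      rw [h4, norm_smul, Real.norm_eq_abs, abs_of_nonpos (by linarith [ht.2])]
      ring_nf
    calc ‖(f' (a + t • d) - f' b) d‖ ≤ ‖f' (a + t • d) - f' b‖ * ‖d‖ := h2
      _ ≤ L * ((1 - t) * ‖d‖) * ‖d‖ := by
          rw [← h5]; exact mul_le_mul_of_nonneg_right h3 (norm_nonneg _)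
      _ = L * ‖d‖ ^ 2 * (1 - t) := by ring
  have hmain : ‖∫ t in (0:ℝ)..1, ((f' (a + t • d)) d - (f' b) d)‖ ≤
      |∫ t in (0:ℝ)..1, L * ‖d‖ ^ 2 * (1 - t)| := by
    apply intervalIntegral.norm_integral_le_abs_of_norm_le
    · filter_upwards [MeasureTheory.ae_restrict_mem measurableSet_Ioc] with t ht
      rw [Set.uIoc_of_le zero_le_one] at ht
      exact hbound t ht
    · apply ContinuousOn.intervalIntegrable; fun_prop
  have hval : ∫ t in (0:ℝ)..1, L * ‖d‖ ^ 2 * (1 - t) = L / 2 * ‖d‖ ^ 2 := by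
    rw [intervalIntegral.integral_const_mul]
    have : ∫ t in (0:ℝ)..1, (1 - t) = 1 / 2 := by
      rw [intervalIntegral.integral_sub intervalIntegrable_const intervalIntegrable_id,
        intervalIntegral.integral_const, integral_id]
      norm_num
    rw [this]; ring
  calc _ ≤ _ := hmain
    _ = L / 2 * ‖d‖ ^ 2 := by
        rw [hval, abs_of_nonneg]
        positivity

set_option maxHeartbeats 2000000 in
/-- one-step error estimate for the Gauss–Newton–Kurchatov iterate
`x⁺ = x − (AᵀA)⁻¹Aᵀ(F(x) + G(x))` with `A = F'(x) + δG(2x − x', x')`. -/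
theorem gauss_newton_kurchatov_one_step_estimate
    {n m : ℕ}
    (F G : EuclideanSpace ℝ (Fin n) → EuclideanSpace ℝ (Fin m))
    (F' : EuclideanSpace ℝ (Fin n) →
      (EuclideanSpace ℝ (Fin n) →L[ℝ] EuclideanSpace ℝ (Fin m)))
    (δG : EuclideanSpace ℝ (Fin n) → EuclideanSpace ℝ (Fin n) →
      (EuclideanSpace ℝ (Fin n) →L[ℝ] EuclideanSpace ℝ (Fin m)))
    (δ₂G : EuclideanSpace ℝ (Fin n) → EuclideanSpace ℝ (Fin n) →
      EuclideanSpace ℝ (Fin n) →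
      (EuclideanSpace ℝ (Fin n) →L[ℝ]
        (EuclideanSpace ℝ (Fin n) →L[ℝ] EuclideanSpace ℝ (Fin m))))
    (S : Set (EuclideanSpace ℝ (Fin n))) (hS : Convex ℝ S)
    (xs x x' : EuclideanSpace ℝ (Fin n))
    (hxs : xs ∈ S) (hx : x ∈ S) (hx' : x' ∈ S) (hx₂ : 2 • x - x' ∈ S)
    (hF : ∀ z ∈ S, HasFDerivAt F (F' z) z)
    (hFcont : ContinuousOn F' S)
    (hδG : ∀ u ∈ S, ∀ v ∈ S, (δG u v) (u - v) = G u - G v)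
    (hlaw₁ : ∀ u ∈ S, ∀ v ∈ S, ∀ y ∈ S, δG u y - δG v y = (δ₂G u y v) (u - v))
    (hlaw₂ : ∀ z ∈ S, ∀ u ∈ S, ∀ v ∈ S, δG z u - δG z v = (δ₂G z u v) (u - v))
    (L M N α η g : ℝ)
    (hL : ∀ u ∈ S, ∀ v ∈ S, ‖F' u - F' v‖ ≤ L * ‖u - v‖)
    (hM : ∀ a ∈ S, ∀ b ∈ S, ∀ u ∈ S, ∀ v ∈ S,
      ‖δG a b - δG u v‖ ≤ M * (‖a - u‖ + ‖b - v‖))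
    (hN : ∀ u ∈ S, ∀ v ∈ S, ∀ a ∈ S, ∀ b ∈ S,
      ‖δ₂G u a b - δ₂G v a b‖ ≤ N * ‖u - v‖)
    (hstat : (ContinuousLinearMap.adjoint (F' xs + δG xs xs)) (F xs + G xs) = 0)
    (hη : ‖F xs + G xs‖ ≤ η)
    (hα : ‖F' xs + δG xs xs‖ ≤ α)
    (A : EuclideanSpace ℝ (Fin n) →L[ℝ] EuclideanSpace ℝ (Fin m))
    (hA : A = F' x + δG (2 • x - x') x')
    (hUnit : IsUnit ((ContinuousLinearMap.adjoint A).comp A))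
    (hg : ‖Ring.inverse ((ContinuousLinearMap.adjoint A).comp A)‖ ≤ g)
    (xp : EuclideanSpace ℝ (Fin n))
    (hxp : xp = x - (Ring.inverse ((ContinuousLinearMap.adjoint A).comp A))
      ((ContinuousLinearMap.adjoint A) (F x + G x))) :
    ‖xp - xs‖ ≤
      g * ((α + (L + 2 * M) * ‖x - xs‖ + N * ‖x - x'‖ ^ 2) *
            ((L / 2 + M) * ‖x - xs‖ + N * ‖x - x'‖ ^ 2) * ‖x - xs‖ +
          η * ((L + 2 * M) * ‖x - xs‖ + N * ‖x - x'‖ ^ 2)) := by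
  set As : EuclideanSpace ℝ (Fin n) →L[ℝ] EuclideanSpace ℝ (Fin m) :=
    F' xs + δG xs xs with hAs
  set T := (ContinuousLinearMap.adjoint A).comp A with hT
  set B := Ring.inverse T with hB
  set r := ‖x - xs‖ with hr
  set s := ‖x - x'‖ with hs
  -- inverse property
  have hinv : ∀ v, B (T v) = v := by
    intro v
    have h := Ring.inverse_mul_cancel T hUnit
    have : (Ring.inverse T * T) v = (1 : EuclideanSpace ℝ (Fin n) →L[ℝ]
        EuclideanSpace ℝ (Fin n)) v := by rw [h]
    simpa [ContinuousLinearMap.mul_apply] using this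
  -- key identity
  have hkey : xp - xs = B ((ContinuousLinearMap.adjoint A)
      (A (x - xs) - (F x + G x))) := by
    have h2 : (ContinuousLinearMap.adjoint A) (A (x - xs) - (F x + G x))
        = T (x - xs) - (ContinuousLinearMap.adjoint A) (F x + G x) := by
      rw [map_sub]; rfl
    rw [hxp, h2, map_sub, hinv]
    abel
  -- algebra: 2 • x - x' - x = x - x'
  have htwo : (2 • x - x') - x = x - x' := by
    rw [two_smul]; abel
  -- bound on δG (2x-x') x' - δG x x
  have key1 : ‖δG (2 • x - x') x' - δG x x‖ ≤ N * s ^ 2 := by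
    have e1 := hlaw₁ (2 • x - x') hx₂ x hx x' hx'
    have e2 := hlaw₂ x hx x' hx' x hx
    have ecomb : δG (2 • x - x') x' - δG x x
        = (δ₂G (2 • x - x') x' x - δ₂G x x' x) (x - x') := by
      have h3 : δG (2 • x - x') x' - δG x x
          = (δG (2 • x - x') x' - δG x x') + (δG x x' - δG x x) := by abel
      rw [h3, e1, e2, htwo, ContinuousLinearMap.sub_apply]
      have h4 : x' - x = -(x - x') := by abel
      rw [h4, map_neg]
      abel
    rw [ecomb]
    calc ‖(δ₂G (2 • x - x') x' x - δ₂G x x' x) (x - x')‖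
        ≤ ‖δ₂G (2 • x - x') x' x - δ₂G x x' x‖ * ‖x - x'‖ :=
          ContinuousLinearMap.le_opNorm _ _
      _ ≤ (N * ‖(2 • x - x') - x‖) * ‖x - x'‖ := by
          apply mul_le_mul_of_nonneg_right _ (norm_nonneg _)
          exact hN (2 • x - x') hx₂ x hx x' hx' x hx
      _ = N * s ^ 2 := by rw [htwo, hs]; ring
  -- bound on A - As
  have hΔ : ‖A - As‖ ≤ (L + 2 * M) * r + N * s ^ 2 := by
    have hsplit : A - As = (F' x - F' xs) + (δG (2 • x - x') x' - δG x x)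
        + (δG x x - δG xs xs) := by rw [hA, hAs]; abel
    have h1 := hL x hx xs hxs
    have h2 := hM x hx x hx xs hxs xs hxs
    calc ‖A - As‖ ≤ ‖F' x - F' xs‖ + ‖δG (2 • x - x') x' - δG x x‖
          + ‖δG x x - δG xs xs‖ := by
          rw [hsplit]; exact norm_add₃_le
      _ ≤ L * r + N * s ^ 2 + M * (r + r) := by
          apply add_le_add (add_le_add h1 key1) h2
      _ = (L + 2 * M) * r + N * s ^ 2 := by ring
  have hΔ0 : (0:ℝ) ≤ (L + 2 * M) * r + N * s ^ 2 :=
    le_trans (norm_nonneg _) hΔ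
  -- bound on w = A(x - xs) - (F x + G x - (F xs + G xs))
  have hw : ‖A (x - xs) - ((F x + G x) - (F xs + G xs))‖
      ≤ ((L / 2 + M) * r + N * s ^ 2) * r := by
    have hGdiff : (δG x xs) (x - xs) = G x - G xs := hδG x hx xs hxs
    have hδd : ‖δG (2 • x - x') x' - δG x xs‖ ≤ N * s ^ 2 + M * r := by
      have h5 := hM x hx x hx x hx xs hxs
      have h6 : δG (2 • x - x') x' - δG x xs
          = (δG (2 • x - x') x' - δG x x) + (δG x x - δG x xs) := by abel
      calc ‖δG (2 • x - x') x' - δG x xs‖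
          ≤ ‖δG (2 • x - x') x' - δG x x‖ + ‖δG x x - δG x xs‖ := by
            rw [h6]; exact norm_add_le _ _
        _ ≤ N * s ^ 2 + M * (‖x - x‖ + ‖x - xs‖) := add_le_add key1 h5
        _ = N * s ^ 2 + M * r := by simp [hr]
    have hTay : ‖F x - F xs - (F' x) (x - xs)‖ ≤ L / 2 * r ^ 2 :=
      taylor_half_bound F F' hS hF hFcont hL hxs hx
    have hsplit : A (x - xs) - ((F x + G x) - (F xs + G xs))
        = -(F x - F xs - (F' x) (x - xs))
          + (δG (2 • x - x') x' - δG x xs) (x - xs) := by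
      rw [hA, ContinuousLinearMap.add_apply, ContinuousLinearMap.sub_apply, hGdiff]
      abel
    calc ‖A (x - xs) - ((F x + G x) - (F xs + G xs))‖
        ≤ ‖F x - F xs - (F' x) (x - xs)‖
          + ‖(δG (2 • x - x') x' - δG x xs) (x - xs)‖ := by
          rw [hsplit]
          refine le_trans (norm_add_le _ _) ?_
          rw [norm_neg]
      _ ≤ L / 2 * r ^ 2 + (N * s ^ 2 + M * r) * r := by
          apply add_le_add hTay
          calc ‖(δG (2 • x - x') x' - δG x xs) (x - xs)‖
              ≤ ‖δG (2 • x - x') x' - δG x xs‖ * r :=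
                ContinuousLinearMap.le_opNorm _ _
            _ ≤ (N * s ^ 2 + M * r) * r :=
                mul_le_mul_of_nonneg_right hδd (norm_nonneg _)
      _ = ((L / 2 + M) * r + N * s ^ 2) * r := by ring
  -- norm of A
  have hAnorm : ‖A‖ ≤ α + ((L + 2 * M) * r + N * s ^ 2) := by
    have h8 : A = As + (A - As) := by abel
    calc ‖A‖ = ‖As + (A - As)‖ := by rw [← h8]
      _ ≤ ‖As‖ + ‖A - As‖ := norm_add_le _ _
      _ ≤ α + ((L + 2 * M) * r + N * s ^ 2) := add_le_add hα hΔ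
  -- decomposition of xp - xs
  have hdecomp : xp - xs = B ((ContinuousLinearMap.adjoint A)
        (A (x - xs) - ((F x + G x) - (F xs + G xs)))
      - (ContinuousLinearMap.adjoint (A - As)) (F xs + G xs)) := by
    have h7 : (ContinuousLinearMap.adjoint (A - As)) (F xs + G xs)
        = (ContinuousLinearMap.adjoint A) (F xs + G xs) := by
      rw [map_sub, ContinuousLinearMap.sub_apply, hstat, sub_zero]
    rw [hkey]
    congr 1
    rw [h7, ← map_sub (ContinuousLinearMap.adjoint A)]
    congr 1
    abel
  -- final estimate
  have hg0 : (0:ℝ) ≤ g := le_trans (norm_nonneg _) hg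
  rw [hdecomp]
  calc ‖B ((ContinuousLinearMap.adjoint A)
        (A (x - xs) - ((F x + G x) - (F xs + G xs)))
      - (ContinuousLinearMap.adjoint (A - As)) (F xs + G xs))‖
      ≤ ‖B‖ * ‖(ContinuousLinearMap.adjoint A)
        (A (x - xs) - ((F x + G x) - (F xs + G xs)))
      - (ContinuousLinearMap.adjoint (A - As)) (F xs + G xs)‖ :=
        ContinuousLinearMap.le_opNorm _ _
    _ ≤ g * ((α + ((L + 2 * M) * r + N * s ^ 2)) *
          (((L / 2 + M) * r + N * s ^ 2) * r)
        + ((L + 2 * M) * r + N * s ^ 2) * η) := by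
        apply mul_le_mul hg _ (norm_nonneg _) hg0
        calc ‖(ContinuousLinearMap.adjoint A)
              (A (x - xs) - ((F x + G x) - (F xs + G xs)))
            - (ContinuousLinearMap.adjoint (A - As)) (F xs + G xs)‖
            ≤ ‖(ContinuousLinearMap.adjoint A)
              (A (x - xs) - ((F x + G x) - (F xs + G xs)))‖
            + ‖(ContinuousLinearMap.adjoint (A - As)) (F xs + G xs)‖ :=
              norm_sub_le _ _
          _ ≤ ‖A‖ * ‖A (x - xs) - ((F x + G x) - (F xs + G xs))‖
            + ‖A - As‖ * ‖F xs + G xs‖ := by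
              apply add_le_add
              · refine le_trans (ContinuousLinearMap.le_opNorm _ _) ?_
                rw [LinearIsometryEquiv.norm_map]
              · refine le_trans (ContinuousLinearMap.le_opNorm _ _) ?_
                rw [LinearIsometryEquiv.norm_map]
          _ ≤ (α + ((L + 2 * M) * r + N * s ^ 2)) *
                (((L / 2 + M) * r + N * s ^ 2) * r)
            + ((L + 2 * M) * r + N * s ^ 2) * η := by
              apply add_le_add
              · apply mul_le_mul hAnorm hw (norm_nonneg _)
                exact le_trans (norm_nonneg _) hAnorm
              · exact mul_le_mul hΔ hη (norm_nonneg _) hΔ0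
    _ = g * ((α + (L + 2 * M) * r + N * s ^ 2) *
          ((L / 2 + M) * r + N * s ^ 2) * r +
        η * ((L + 2 * M) * r + N * s ^ 2)) := by ring
end

section
/- Let B, α, η, L, M, N, L₀, M₀, N₀ ≥ 0 with B > 0, and let r > 0 satisfy B(2α + (L₀ + 2M₀)r + 4N₀r²)((L₀ + 2M₀)r + 4N₀r²) < 1, so that g(r) = B[1 − B(2α + (L₀ + 2M₀)r + 4N₀r²)((L₀ + 2M₀)r + 4N₀r²)]⁻¹ is defined. Define φ(r) = α + (L + 2M)r + 4Nr², a(r) = g(r)·((L + 2M + 3Nr)η + φ(r)·((L/2 + M)r + 4Nr²)), b(r) = g(r)·N·r·η, and q(r) = B[φ(r)((L/2 + M)r + 4Nr²) + (L + 2M + 4Nr)η] + B[2α + (L₀ + 2M₀)r + 4N₀r²][(L₀ + 2M₀)r + 4N₀r²] − 1. If q(r) = 0, then a(r) ≥ 0, b(r) ≥ 0, and a(r) + b(r) = 1. -/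
/-- at the positive zero `r` of `q`, the coefficients
`a(r)` and `b(r)` are nonnegative and sum to `1`. -/
theorem a_add_b_eq_one_at_root
    (B α η L M N L₀ M₀ N₀ r : ℝ)
    (hB : 0 < B) (hα : 0 ≤ α) (hη : 0 ≤ η) (hL : 0 ≤ L) (hM : 0 ≤ M)
    (hN : 0 ≤ N) (hL₀ : 0 ≤ L₀) (hM₀ : 0 ≤ M₀) (hN₀ : 0 ≤ N₀) (hr : 0 < r)
    (hdenom : B * (2*α + (L₀ + 2*M₀)*r + 4*N₀*r^2)
        * ((L₀ + 2*M₀)*r + 4*N₀*r^2) < 1)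
    (g φ a b q : ℝ)
    (hg : g = B * (1 - B * (2*α + (L₀ + 2*M₀)*r + 4*N₀*r^2)
        * ((L₀ + 2*M₀)*r + 4*N₀*r^2))⁻¹)
    (hφ : φ = α + (L + 2*M)*r + 4*N*r^2)
    (ha : a = g * ((L + 2*M + 3*N*r)*η + φ * ((L/2 + M)*r + 4*N*r^2)))
    (hb : b = g * N * r * η)
    (hqdef : q = B * (φ * ((L/2 + M)*r + 4*N*r^2) + (L + 2*M + 4*N*r)*η)
        + B * (2*α + (L₀ + 2*M₀)*r + 4*N₀*r^2) * ((L₀ + 2*M₀)*r + 4*N₀*r^2) - 1)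
    (hroot : q = 0) :
    0 ≤ a ∧ 0 ≤ b ∧ a + b = 1 := by
  set D : ℝ := 1 - B * (2*α + (L₀ + 2*M₀)*r + 4*N₀*r^2)
      * ((L₀ + 2*M₀)*r + 4*N₀*r^2) with hD
  have hDpos : 0 < D := by simp only [hD]; linarith
  have hDne : D ≠ 0 := ne_of_gt hDpos
  have hgpos : 0 < g := by rw [hg]; positivity
  have hφpos : 0 ≤ φ := by rw [hφ]; positivity
  refine ⟨?_, ?_, ?_⟩
  · rw [ha]; positivity
  · rw [hb]; positivity
  · have hq : B * (φ * ((L/2 + M)*r + 4*N*r^2) + (L + 2*M + 4*N*r)*η) = D := by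
      simp only [hD]; linarith [hqdef, hroot]
    have h2 : a + b = B * (φ * ((L/2 + M)*r + 4*N*r^2) + (L + 2*M + 4*N*r)*η) * D⁻¹ := by
      rw [ha, hb, hg, hD]; ring
    rw [h2, hq, mul_inv_cancel₀ hDne]
end

section
/- Let a ≥ 0, b ≥ 0 with a + b < 1, and let (θ_n)_{n ≥ −1} be a sequence of nonnegative real numbers satisfying θ_{n+1} ≤ a·θ_n + b·θ_{n−1} for all n ≥ 0. Then θ_n → 0 as n → ∞. -/
/-- a nonnegative sequence (indexed from `−1`, here shifted so that
`θ 0` is `θ₋₁`) satisfying `θ_{n+1} ≤ a θ_n + b θ_{n−1}` with `a, b ≥ 0`,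
`a + b < 1`, converges to `0`. -/
theorem tendsto_zero_of_two_step_contraction
    (a b : ℝ) (ha : 0 ≤ a) (hb : 0 ≤ b) (hab : a + b < 1)
    (θ : ℕ → ℝ) (hθ : ∀ k, 0 ≤ θ k)
    (hrec : ∀ k, θ (k + 2) ≤ a * θ (k + 1) + b * θ k) :
    Filter.Tendsto θ Filter.atTop (nhds 0) := by
  set c := a + b with hc
  have hc0 : 0 ≤ c := by positivity
  have hc1 : c < 1 := hab
  set S : ℝ := max (θ 0) (θ 1) with hS
  have hS0 : 0 ≤ S := le_trans (hθ 0) (le_max_left _ _)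
  have key : ∀ n, θ n ≤ c ^ (n / 2) * S := by
    intro n
    induction n using Nat.strong_induction_on with
    | _ n ih =>
      match n with
      | 0 => rw [pow_zero, one_mul]; exact le_max_left _ _
      | 1 => rw [pow_zero, one_mul]; exact le_max_right _ _
      | (m + 2) =>
        have h1 : θ (m + 1) ≤ c ^ (m / 2) * S := by
          refine (ih (m + 1) (by omega)).trans ?_
          exact mul_le_mul_of_nonneg_right
            (pow_le_pow_of_le_one hc0 hc1.le (by omega)) hS0
        have h2 : θ m ≤ c ^ (m / 2) * S := ih m (by omega)
        have : θ (m + 2) ≤ c * (c ^ (m / 2) * S) := by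
          calc θ (m + 2) ≤ a * θ (m + 1) + b * θ m := hrec m
            _ ≤ a * (c ^ (m / 2) * S) + b * (c ^ (m / 2) * S) := by
                gcongr
            _ = c * (c ^ (m / 2) * S) := by ring
        refine this.trans (le_of_eq ?_)
        have : (m + 2) / 2 = m / 2 + 1 := by omega
        rw [this, pow_succ]
        ring
  have hlim : Filter.Tendsto (fun n => c ^ (n / 2) * S) Filter.atTop (nhds 0) := by
    have h1 : Filter.Tendsto (fun n : ℕ => c ^ (n / 2)) Filter.atTop (nhds 0) := by
      have := tendsto_pow_atTop_nhds_zero_of_lt_one hc0 hc1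
      exact this.comp (Filter.tendsto_atTop_atTop.2 fun N => ⟨2 * N, fun n hn => by omega⟩)
    simpa using h1.mul_const S
  exact squeeze_zero hθ key hlim
end
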